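/- Let c > 0 be given and m ≥ 0 an integer. There exists a constant C = C(m, c) such that for all 1/2 ≤ α < 1 and x ≥ 3 with (1 − α)²·log x ≥ c, | ∫_2^x t^{−α}(log t)^{−(2m+2)} dt − x^{1−α}/((1−α)(log x)^{2m+2}) | ≤ C·x^{1−α}/((1−α)²(log x)^{2m+3}). -/

import Mathlib

open Real MeasureTheory

lemma pow_div_fact_le_exp (n : ℕ) {s : ℝ} (hs : 0 ≤ s) : s ^ n / n.factorial ≤ Real.exp s := by
  calc s ^ n / n.factorial ≤ ∑ i ∈ Finset.range (n+1), s ^ i / i.factorial := by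
        refine Finset.single_le_sum (f := fun i => s ^ i / (i.factorial : ℝ)) ?_ (Finset.self_mem_range_succ n)
        intro i _; positivity
    _ ≤ Real.exp s := Real.sum_le_exp_of_nonneg hs _

lemma growth (c : ℝ) (hc : 0 < c) (n : ℕ) :
    ∃ K : ℝ, 0 < K ∧ ∀ α x : ℝ, α < 1 → 3 ≤ x → c ≤ (1 - α) ^ 2 * Real.log x →
      Real.log x ^ n ≤ K * x ^ ((1 - α) / 3) := by
  refine ⟨9 ^ n * (2 * n).factorial / c ^ n, by positivity, fun α x hα hx hcx => ?_⟩
  have hx0 : (0:ℝ) < x := by linarith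
  have hL : 1 ≤ Real.log x := by
    calc (1:ℝ) ≤ Real.log 3 := by
          rw [Real.le_log_iff_exp_le (by norm_num)]
          linarith [Real.exp_one_lt_d9]
    _ ≤ Real.log x := Real.log_le_log (by norm_num) hx
  have hL0 : 0 < Real.log x := by linarith
  have h1α : 0 < 1 - α := by linarith
  -- (1-α) * log x ≥ sqrt (c * log x)
  have hkey : Real.sqrt (c * Real.log x) ≤ (1 - α) * Real.log x := by
    have : Real.sqrt (c * Real.log x) ≤ Real.sqrt (((1-α) * Real.log x)^2) := by
      apply Real.sqrt_le_sqrt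
      have : (1-α)^2 * Real.log x * Real.log x = ((1-α) * Real.log x)^2 := by ring
      nlinarith
    rwa [Real.sqrt_sq (by positivity)] at this
  have hexp : ((c * Real.log x) ^ n / 9 ^ n) / (2*n).factorial ≤ x ^ ((1 - α) / 3) := by
    rw [Real.rpow_def_of_pos hx0]
    calc ((c * Real.log x) ^ n / 9 ^ n) / (2*n).factorial
        = (Real.sqrt (c * Real.log x) / 3) ^ (2*n) / (2*n).factorial := by
          rw [div_pow, pow_mul, Real.sq_sqrt (by positivity)]
          rw [pow_mul]; norm_num
      _ ≤ Real.exp (Real.sqrt (c * Real.log x) / 3) := pow_div_fact_le_exp _ (by positivity)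
      _ ≤ Real.exp (Real.log x * ((1-α)/3)) := by
          apply Real.exp_le_exp.2; rw [mul_comm] at hkey ⊢; linarith
  calc Real.log x ^ n = (9 ^ n * (2*n).factorial / c ^ n) * (((c * Real.log x) ^ n / 9 ^ n) / (2*n).factorial) := by
        field_simp; ring
    _ ≤ _ := by
        apply mul_le_mul_of_nonneg_left hexp (by positivity)
lemma hasDerivAt_F (α : ℝ) (hα : α < 1) (j : ℕ) {t : ℝ} (ht : 2 ≤ t) :
    HasDerivAt (fun t : ℝ => t ^ (1-α) / ((1-α) * Real.log t ^ (j+1)))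
      (t ^ (-α) / Real.log t ^ (j+1) - ((j+1:ℕ)/(1-α)) * (t ^ (-α) / Real.log t ^ (j+2))) t := by
  have ht0 : (0:ℝ) < t := by linarith
  have htne : t ≠ 0 := ne_of_gt ht0
  have hL : 0 < Real.log t := Real.log_pos (by linarith)
  have ha : (0:ℝ) < 1 - α := by linarith
  have h1 : HasDerivAt (fun t : ℝ => t ^ (1-α)) ((1-α) * t ^ (1-α-1)) t :=
    Real.hasDerivAt_rpow_const (Or.inl htne)
  have hlog : HasDerivAt Real.log t⁻¹ t := Real.hasDerivAt_log htne
  have h2 : HasDerivAt (fun t : ℝ => (1-α) * Real.log t ^ (j+1))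
      ((1-α) * (((j+1:ℕ)) * Real.log t ^ j * t⁻¹)) t := by
    exact ((hlog.pow (j+1)).const_mul (1-α)).congr_deriv (by push_cast; ring_nf)
  have hden : (1-α) * Real.log t ^ (j+1) ≠ 0 := by positivity
  have h3 := h1.div h2 hden
  refine h3.congr_deriv ?_
  have e1 : t ^ (1-α-1) = t ^ (-α) := by norm_num
  have e2 : t ^ (1-α) = t ^ (-α) * t := by
    rw [show (1-α) = -α + 1 by ring, Real.rpow_add ht0, Real.rpow_one]
  rw [e1, e2]
  have hLne : Real.log t ≠ 0 := ne_of_gt hL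
  field_simp
  ring

lemma intOn (α : ℝ) (k : ℕ) {a b : ℝ} (ha : 2 ≤ a) (hab : a ≤ b) :
    IntervalIntegrable (fun t : ℝ => t ^ (-α) / Real.log t ^ k) volume a b := by
  apply ContinuousOn.intervalIntegrable
  rw [Set.uIcc_of_le hab]
  have hpos : ∀ t ∈ Set.Icc a b, (0:ℝ) < t := fun t ht => by
    have := ht.1; linarith
  apply ContinuousOn.div
  · exact continuousOn_id.rpow_const fun t ht => Or.inl (ne_of_gt (hpos t ht))
  · exact (Real.continuousOn_log.mono fun t ht => ne_of_gt (hpos t ht)).pow k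
  · intro t ht
    have h1 : 1 < t := by have := ht.1; linarith
    exact pow_ne_zero _ (ne_of_gt (Real.log_pos h1))

lemma intOn' (α : ℝ) {a b : ℝ} (ha : 2 ≤ a) (hab : a ≤ b) :
    IntervalIntegrable (fun t : ℝ => t ^ (-α)) volume a b := by
  apply ContinuousOn.intervalIntegrable
  rw [Set.uIcc_of_le hab]
  exact continuousOn_id.rpow_const fun t ht => Or.inl (by have h1 := ht.1; exact ne_of_gt (show (0:ℝ) < id t by simp only [id]; linarith))

lemma int_rpow_le (α : ℝ) (hα : α < 1) {a b : ℝ} (ha : 0 < a) (hab : a ≤ b) :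
    ∫ t in a..b, t ^ (-α) ≤ b ^ (1-α) / (1-α) := by
  rw [integral_rpow (Or.inl (by linarith))]
  rw [show -α + 1 = 1 - α by ring]
  have h0 : (0:ℝ) ≤ a ^ (1-α) := by positivity
  gcongr
  · linarith

lemma int_comp (α : ℝ) (k : ℕ) {a b M : ℝ} (ha : 2 ≤ a) (hab : a ≤ b) (hM : 0 < M)
    (hlog : ∀ t ∈ Set.Icc a b, M ≤ Real.log t) :
    ∫ t in a..b, t ^ (-α) / Real.log t ^ k ≤ (∫ t in a..b, t ^ (-α)) / M ^ k := by
  rw [← intervalIntegral.integral_div]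
  apply intervalIntegral.integral_mono_on hab (intOn α k ha hab)
    ((intOn' α ha hab).div_const _)
  intro t ht
  have ht0 : (0:ℝ) < t := by have := ht.1; linarith
  have hMt := hlog t ht
  have h1 : (0:ℝ) ≤ t ^ (-α) := by positivity
  gcongr

lemma ftc (α : ℝ) (hα : α < 1) (j : ℕ) {x : ℝ} (hx : 3 ≤ x) :
    ∫ t in (2:ℝ)..x, t ^ (-α) / Real.log t ^ (j+1)
      = x ^ (1-α) / ((1-α) * Real.log x ^ (j+1)) - 2 ^ (1-α) / ((1-α) * Real.log 2 ^ (j+1))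
        + ((j+1:ℕ)/(1-α)) * ∫ t in (2:ℝ)..x, t ^ (-α) / Real.log t ^ (j+2) := by
  have h2x : (2:ℝ) ≤ x := by linarith
  have hint1 := intOn α (j+1) (le_refl 2) h2x
  have hint2 := intOn α (j+2) (le_refl 2) h2x
  have hFTC := intervalIntegral.integral_eq_sub_of_hasDerivAt
    (f := fun t : ℝ => t ^ (1-α) / ((1-α) * Real.log t ^ (j+1)))
    (f' := fun t : ℝ => t ^ (-α) / Real.log t ^ (j+1)
        - ((j+1:ℕ)/(1-α)) * (t ^ (-α) / Real.log t ^ (j+2)))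
    (fun t ht => by
      rw [Set.uIcc_of_le h2x] at ht
      exact hasDerivAt_F α hα j ht.1)
    (hint1.sub (hint2.const_mul _))
  rw [intervalIntegral.integral_sub hint1 (hint2.const_mul _),
    intervalIntegral.integral_const_mul] at hFTC
  linarith
set_option maxHeartbeats 1000000 in
theorem integral_inv_rpow_log_asymp (c : ℝ) (hc : 0 < c) (m : ℕ) :
    ∃ C : ℝ, 0 < C ∧
      ∀ α x : ℝ, 1 / 2 ≤ α → α < 1 → 3 ≤ x → c ≤ (1 - α) ^ 2 * Real.log x →
        |(∫ t in (2 : ℝ)..x, t ^ (-α) / Real.log t ^ (2 * m + 2)) -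
            x ^ (1 - α) / ((1 - α) * Real.log x ^ (2 * m + 2))| ≤
          C * x ^ (1 - α) / ((1 - α) ^ 2 * Real.log x ^ (2 * m + 3)) := by
  obtain ⟨K, hK, hgrow⟩ := growth c hc (2 * m + 3)
  have hl2 : (0:ℝ) < Real.log 2 := Real.log_pos (by norm_num)
  refine ⟨2 * K / Real.log 2 ^ (2*m+2) + (2*m+2) * K / Real.log 2 ^ (2*m+3)
      + (2*m+2) * (3/2) ^ (2*m+3), by positivity, ?_⟩
  intro α x hα2 hα1 hx hcx
  have hx0 : (0:ℝ) < x := by linarith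
  have hx1 : (1:ℝ) ≤ x := by linarith
  have hu : (0:ℝ) < 1 - α := by linarith
  have hL : 1 ≤ Real.log x := by
    calc (1:ℝ) ≤ Real.log 3 := by
          rw [Real.le_log_iff_exp_le (by norm_num)]; linarith [Real.exp_one_lt_d9]
      _ ≤ Real.log x := Real.log_le_log (by norm_num) hx
  have hL0 : (0:ℝ) < Real.log x := by linarith
  -- FTC identity
  have hftc : (∫ t in (2:ℝ)..x, t ^ (-α) / Real.log t ^ (2*m+2))
      = x ^ (1-α) / ((1-α) * Real.log x ^ (2*m+2)) - 2 ^ (1-α) / ((1-α) * Real.log 2 ^ (2*m+2))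
        + ((2*m+1+1:ℕ)/(1-α)) * ∫ t in (2:ℝ)..x, t ^ (-α) / Real.log t ^ (2*m+3) :=
    ftc α hα1 (2*m+1) hx
  -- split point
  set y := x ^ ((2:ℝ)/3) with hy
  have hy3 : (3:ℝ) ^ ((2:ℝ)/3) ≤ y := Real.rpow_le_rpow (by norm_num) hx (by norm_num)
  have hy2 : (2:ℝ) ≤ y := by
    refine le_trans ?_ hy3
    have h8 : (2:ℝ) ^ (3:ℕ) ≤ ((3:ℝ) ^ ((2:ℝ)/3)) ^ (3:ℕ) := by
      rw [← Real.rpow_natCast ((3:ℝ) ^ ((2:ℝ)/3)) 3, ← Real.rpow_mul (by norm_num)]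
      norm_num
    by_contra hcon
    push_neg at hcon
    have := pow_lt_pow_left₀ hcon (Real.rpow_nonneg (by norm_num) _) (by norm_num : (3:ℕ) ≠ 0)
    linarith
  have hyx : y ≤ x := by
    calc y ≤ x ^ (1:ℝ) := Real.rpow_le_rpow_of_exponent_le hx1 (by norm_num)
      _ = x := Real.rpow_one x
  have hy0 : (0:ℝ) < y := by linarith
  -- split the integral
  have hsplit : (∫ t in (2:ℝ)..x, t ^ (-α) / Real.log t ^ (2*m+3))
      = (∫ t in (2:ℝ)..y, t ^ (-α) / Real.log t ^ (2*m+3))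
        + ∫ t in y..x, t ^ (-α) / Real.log t ^ (2*m+3) :=
    (intervalIntegral.integral_add_adjacent_intervals
      (intOn α (2*m+3) (le_refl 2) hy2) (intOn α (2*m+3) hy2 hyx)).symm
  -- bound the two pieces
  have hlogy : Real.log y = (2/3) * Real.log x := by
    rw [hy, Real.log_rpow hx0]
  have hb1 : (∫ t in (2:ℝ)..y, t ^ (-α) / Real.log t ^ (2*m+3))
      ≤ (y ^ (1-α) / (1-α)) / Real.log 2 ^ (2*m+3) := by
    calc (∫ t in (2:ℝ)..y, t ^ (-α) / Real.log t ^ (2*m+3))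
        ≤ (∫ t in (2:ℝ)..y, t ^ (-α)) / Real.log 2 ^ (2*m+3) := by
          apply int_comp α (2*m+3) (le_refl 2) hy2 hl2
          intro t ht
          exact Real.log_le_log (by norm_num) ht.1
      _ ≤ (y ^ (1-α) / (1-α)) / Real.log 2 ^ (2*m+3) := by
          gcongr
          exact int_rpow_le α hα1 (by norm_num) hy2
  have hb2 : (∫ t in y..x, t ^ (-α) / Real.log t ^ (2*m+3))
      ≤ (x ^ (1-α) / (1-α)) / ((2/3) * Real.log x) ^ (2*m+3) := by
    calc (∫ t in y..x, t ^ (-α) / Real.log t ^ (2*m+3))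
        ≤ (∫ t in y..x, t ^ (-α)) / ((2/3) * Real.log x) ^ (2*m+3) := by
          apply int_comp α (2*m+3) hy2 hyx (by positivity)
          intro t ht
          rw [← hlogy]
          exact Real.log_le_log (by linarith) ht.1
      _ ≤ (x ^ (1-α) / (1-α)) / ((2/3) * Real.log x) ^ (2*m+3) := by
          gcongr
          exact int_rpow_le α hα1 hy0 hyx
  have hI2nonneg : (0:ℝ) ≤ ∫ t in (2:ℝ)..x, t ^ (-α) / Real.log t ^ (2*m+3) := by
    apply intervalIntegral.integral_nonneg (by linarith)
    intro t ht
    have h1 : (1:ℝ) ≤ t := by have := ht.1; linarith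
    have h0 : (0:ℝ) < t := by linarith
    exact div_nonneg (by positivity) (pow_nonneg (Real.log_nonneg h1) _)
  -- growth facts
  have hG : Real.log x ^ (2*m+3) ≤ K * x ^ ((1-α)/3) := hgrow α x hα1 hx hcx
  have hx13 : x ^ ((1-α)/3) ≤ x ^ (1-α) :=
    Real.rpow_le_rpow_of_exponent_le hx1 (by linarith)
  have hysplit : y ^ (1-α) * x ^ ((1-α)/3) = x ^ (1-α) := by
    rw [hy, ← Real.rpow_mul (le_of_lt hx0), ← Real.rpow_add hx0]
    congr 1
    ring
  -- abbreviations
  have hA0 : (0:ℝ) < x ^ (1-α) := Real.rpow_pos_of_pos hx0 _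
  have hy1 : (0:ℝ) < y ^ (1-α) := Real.rpow_pos_of_pos hy0 _
  have hN : ((2*m+1+1:ℕ):ℝ) = 2*(m:ℝ)+2 := by push_cast; ring
  rw [hN] at hftc
  set N : ℝ := 2*(m:ℝ)+2 with hNdef
  have hN0 : (0:ℝ) ≤ N := by positivity
  set u : ℝ := 1 - α with hudef
  set L : ℝ := Real.log x with hLdef
  set l2 : ℝ := Real.log 2 with hl2def
  set A : ℝ := x ^ (1-α) with hAdef
  -- key growth consequences
  have key2 : L ^ (2*m+3) ≤ K * A := le_trans hG (by
    apply mul_le_mul_of_nonneg_left hx13 (le_of_lt hK))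
  have key1 : y ^ (1-α) * L ^ (2*m+3) ≤ K * A := by
    calc y ^ (1-α) * L ^ (2*m+3) ≤ y ^ (1-α) * (K * x ^ ((1-α)/3)) := by
          apply mul_le_mul_of_nonneg_left hG (le_of_lt hy1)
      _ = K * (y ^ (1-α) * x ^ ((1-α)/3)) := by ring
      _ = K * A := by rw [hysplit]
  have hu1 : u ≤ 1 := by rw [hudef]; linarith
  -- bound on F2
  have h2a : (2:ℝ) ^ (1-α) ≤ 2 := by
    calc (2:ℝ) ^ (1-α) ≤ (2:ℝ) ^ (1:ℝ) :=
          Real.rpow_le_rpow_of_exponent_le (by norm_num) (by linarith)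
      _ = 2 := Real.rpow_one 2
  have hULA : u * L ^ (2*m+3) ≤ K * A := by
    have h1 : u * L ^ (2*m+3) ≤ 1 * L ^ (2*m+3) :=
      mul_le_mul_of_nonneg_right hu1 (by positivity)
    linarith
  have HF2 : (2:ℝ) ^ (1-α) / (u * l2 ^ (2*m+2)) ≤ 2 * K / l2 ^ (2*m+2) * A / (u^2 * L ^ (2*m+3)) := by
    rw [div_le_div_iff₀ (by positivity) (by positivity)]
    have hcancel : 2 * K / l2 ^ (2*m+2) * A * (u * l2 ^ (2*m+2)) = 2 * K * A * u := by
      field_simp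
    rw [hcancel]
    have h6 := mul_le_mul h2a hULA (by positivity) (by norm_num : (0:ℝ) ≤ 2)
    have h7 := mul_le_mul_of_nonneg_left h6 (le_of_lt hu)
    calc (2:ℝ) ^ (1-α) * (u^2 * L ^ (2*m+3)) = u * ((2:ℝ)^(1-α) * (u * L ^ (2*m+3))) := by ring
      _ ≤ u * (2 * (K * A)) := h7
      _ = 2 * K * A * u := by ring
  -- bound on first piece
  have HB1 : N / u * (y ^ (1-α) / u / l2 ^ (2*m+3)) ≤ N * K / l2 ^ (2*m+3) * A / (u^2 * L ^ (2*m+3)) := by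
    have e1 : N / u * (y ^ (1-α) / u / l2 ^ (2*m+3)) = N * y ^ (1-α) / (u^2 * l2 ^ (2*m+3)) := by
      field_simp
    rw [e1, div_le_div_iff₀ (by positivity) (by positivity)]
    have hcancel : N * K / l2 ^ (2*m+3) * A * (u^2 * l2 ^ (2*m+3)) = N * K * A * u^2 := by
      field_simp
    rw [hcancel]
    have h8 := mul_le_mul_of_nonneg_left key1 (show (0:ℝ) ≤ N * u^2 by positivity)
    calc N * y ^ (1-α) * (u^2 * L ^ (2*m+3)) = N * u^2 * (y ^ (1-α) * L ^ (2*m+3)) := by ring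
      _ ≤ N * u^2 * (K * A) := h8
      _ = N * K * A * u^2 := by ring
  -- bound on second piece
  have HB2 : N / u * (A / u / ((2/3 * L) ^ (2*m+3))) ≤ N * (3/2) ^ (2*m+3) * A / (u^2 * L ^ (2*m+3)) := by
    have hML : (0:ℝ) < (2/3 * L) ^ (2*m+3) := by positivity
    have e2 : N / u * (A / u / ((2/3 * L) ^ (2*m+3))) = N * A / (u^2 * (2/3 * L) ^ (2*m+3)) := by
      field_simp
    rw [e2, div_le_div_iff₀ (by positivity) (by positivity)]
    have hpow : ((3:ℝ)/2) ^ (2*m+3) * (2/3 * L) ^ (2*m+3) = L ^ (2*m+3) := by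
      rw [← mul_pow]
      congr 1
      ring
    have e3 : N * A * (u^2 * L ^ (2*m+3))
        = N * (3/2) ^ (2*m+3) * A * (u^2 * (2/3 * L) ^ (2*m+3)) := by
      rw [← hpow]; ring
    exact le_of_eq e3
  -- assemble
  have hc2 : (0:ℝ) ≤ N / u := by positivity
  have hF2pos : (0:ℝ) ≤ (2:ℝ) ^ (1-α) / (u * l2 ^ (2*m+2)) := by positivity
  have hc2I2 : (0:ℝ) ≤ N / u * ∫ t in (2:ℝ)..x, t ^ (-α) / Real.log t ^ (2*m+3) :=
    mul_nonneg hc2 hI2nonneg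
  have habs : |(∫ t in (2:ℝ)..x, t ^ (-α) / Real.log t ^ (2*m+2))
      - A / (u * L ^ (2*m+2))|
      ≤ (2:ℝ) ^ (1-α) / (u * l2 ^ (2*m+2))
        + N / u * ∫ t in (2:ℝ)..x, t ^ (-α) / Real.log t ^ (2*m+3) := by
    rw [hftc]
    rw [abs_le]
    constructor
    · linarith
    · linarith
  have hsum : N / u * (∫ t in (2:ℝ)..x, t ^ (-α) / Real.log t ^ (2*m+3))
      ≤ N / u * (y ^ (1-α) / u / l2 ^ (2*m+3)) + N / u * (A / u / ((2/3 * L) ^ (2*m+3))) := by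
    rw [hsplit, mul_add]
    exact add_le_add (mul_le_mul_of_nonneg_left hb1 hc2) (mul_le_mul_of_nonneg_left hb2 hc2)
  calc |(∫ t in (2:ℝ)..x, t ^ (-α) / Real.log t ^ (2*m+2)) - A / (u * L ^ (2*m+2))|
      ≤ (2:ℝ) ^ (1-α) / (u * l2 ^ (2*m+2))
        + N / u * ∫ t in (2:ℝ)..x, t ^ (-α) / Real.log t ^ (2*m+3) := habs
    _ ≤ 2 * K / l2 ^ (2*m+2) * A / (u^2 * L ^ (2*m+3))
        + (N * K / l2 ^ (2*m+3) * A / (u^2 * L ^ (2*m+3))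
          + N * (3/2) ^ (2*m+3) * A / (u^2 * L ^ (2*m+3))) := by
        refine add_le_add HF2 (le_trans hsum (add_le_add HB1 HB2))
    _ = (2 * K / l2 ^ (2*m+2) + (2*m+2) * K / l2 ^ (2*m+3) + (2*m+2) * (3/2) ^ (2*m+3))
          * A / (u^2 * L ^ (2*m+3)) := by
        rw [hNdef]
        push_cast
        ring
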